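/- Every element x of a coalgebra C over a field k is contained in a finite-dimensional subcomodule of C (C being regarded as a right comodule over itself with structure map Δ); consequently every right C-comodule is locally finite-dimensional, i.e. every element of a comodule lies in a finite-dimensional subcomodule. -/

import Mathlib

open TensorProduct

namespace SuperCoalg

variable {k : Type} [Field k]
variable {C : Type} [AddCommGroup C] [Module k C] [Coalgebra k C]

/-- `β : V →ₗ[k] V ⊗[k] C` is a (right) comodule structure map over the coalgebra `C`. -/
structure IsComodule {V : Type} [AddCommGroup V] [Module k V]
    (β : V →ₗ[k] V ⊗[k] C) : Prop where
  coassoc : (TensorProduct.assoc k V C C).toLinearMap ∘ₗ β.rTensor C ∘ₗ β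
      = LinearMap.lTensor V (Coalgebra.comul (R := k) (A := C)) ∘ₗ β
  counit_id : (TensorProduct.rid k V).toLinearMap ∘ₗ
      LinearMap.lTensor V (Coalgebra.counit (R := k) (A := C)) ∘ₗ β = LinearMap.id

/-- A submodule `W ≤ V` is a subcomodule for the structure map `β`, i.e. the coaction
restricts to `W`: the image of `W` lies in `W ⊗ C`. -/
def IsSubcomodule {V : Type} [AddCommGroup V] [Module k V]
    (β : V →ₗ[k] V ⊗[k] C) (W : Submodule k V) : Prop :=
  ∀ w ∈ W, β w ∈ LinearMap.range (W.subtype.rTensor C)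

theorem aux_key {V : Type} [AddCommGroup V] [Module k V]
    (β : V →ₗ[k] V ⊗[k] C) (hβ : IsComodule β) (v : V) :
    ∃ W : Submodule k V,
        IsSubcomodule β W ∧ FiniteDimensional k W ∧ v ∈ W := by
  classical
  set ι := Module.Free.ChooseBasisIndex k C with hι
  set b : Module.Basis ι k C := Module.Free.chooseBasis k C with hb
  set ψ : V ⊗[k] C ≃ₗ[k] (ι →₀ V) :=
    (LinearEquiv.lTensor V b.repr).trans (finsuppScalarRight k k V ι) with hψ
  have hψ_apply : ∀ (x : V) (i : ι), ψ (x ⊗ₜ[k] b i) = Finsupp.single i x := by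
    intro x i
    simp [hψ, LinearEquiv.lTensor, finsuppScalarRight_apply_tmul]
  set t : ι →₀ V := ψ (β v) with ht
  -- reconstruction of β v from the coordinates t
  have hrec : β v = ∑ i ∈ t.support, t i ⊗ₜ[k] b i := by
    apply ψ.injective
    rw [map_sum, ← ht]
    simp only [hψ_apply]
    exact (t.sum_single).symm
  set W : Submodule k V := Submodule.span k (Set.range ⇑t) with hW
  have htW : ∀ i, t i ∈ W := fun i => Submodule.subset_span ⟨i, rfl⟩
  refine ⟨W, ?_, ?_, ?_⟩
  · -- subcomodule
    intro w hw
    have hgen : ∀ i : ι, β (t i) ∈ LinearMap.range (W.subtype.rTensor C) := by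
      intro j
      -- apply Ψⱼ to coassociativity at v
      set g : C ⊗[k] C →ₗ[k] C :=
        (TensorProduct.rid k C).toLinearMap ∘ₗ (b.coord j).lTensor C with hg
      set Ψ : V ⊗[k] (C ⊗[k] C) →ₗ[k] V ⊗[k] C := g.lTensor V with hΨ
      have hco := congrArg (fun z => Ψ z) (LinearMap.congr_fun hβ.coassoc v)
      simp only [LinearMap.comp_apply, LinearEquiv.coe_coe] at hco
      -- compute both sides on the expansion
      rw [hrec] at hco
      simp only [map_sum] at hco
      have hLHS : ∀ i ∈ t.support,
          Ψ ((TensorProduct.assoc k V C C) (β.rTensor C (t i ⊗ₜ[k] b i)))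
            = (Finsupp.single i (1:k)) j • β (t i) := by
        intro i _
        rw [LinearMap.rTensor_tmul]
        -- β (t i) is a general tensor; induct
        induction β (t i) using TensorProduct.induction_on with
        | zero => simp
        | tmul x c => simp [hΨ, hg, TensorProduct.smul_tmul', b.repr_self]
        | add y z hy hz =>
            rw [add_tmul, map_add, map_add, hy, hz, ← smul_add]
      have hRHS : ∀ i ∈ t.support,
          Ψ ((Coalgebra.comul (R := k)).lTensor V (t i ⊗ₜ[k] b i))
            = t i ⊗ₜ[k] g (Coalgebra.comul (b i)) := by
        intro i _
        rw [LinearMap.lTensor_tmul, hΨ, LinearMap.lTensor_tmul]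
      rw [Finset.sum_congr rfl hLHS, Finset.sum_congr rfl hRHS] at hco
      simp only [Finsupp.single_apply, ite_smul, one_smul, zero_smul] at hco
      rw [Finset.sum_ite_eq' t.support j (fun i => β (t i))] at hco
      by_cases hj : j ∈ t.support
      · rw [if_pos hj] at hco
        rw [hco]
        refine Submodule.sum_mem _ fun i _ => ?_
        exact ⟨(⟨t i, htW i⟩ : W) ⊗ₜ[k] g (Coalgebra.comul (b i)), rfl⟩
      · rw [Finsupp.notMem_support_iff] at hj
        rw [hj, map_zero]
        exact Submodule.zero_mem _
    -- extend from generators to all of W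
    have : W ≤ Submodule.comap β (LinearMap.range (W.subtype.rTensor C)) := by
      rw [hW, Submodule.span_le]
      rintro _ ⟨i, rfl⟩
      exact hgen i
    exact this hw
  · -- finite dimensional
    apply FiniteDimensional.span_of_finite
    have : Set.range ⇑t ⊆ insert (0:V) (⇑t '' ↑t.support) := by
      rintro _ ⟨i, rfl⟩
      by_cases hi : i ∈ t.support
      · exact Set.mem_insert_iff.mpr (Or.inr ⟨i, hi, rfl⟩)
      · rw [Finsupp.notMem_support_iff] at hi
        rw [hi]; exact Set.mem_insert _ _
    exact Set.Finite.subset (Set.Finite.insert 0 (t.support.finite_toSet.image ⇑t)) this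
  · -- v ∈ W
    have hcu := LinearMap.congr_fun hβ.counit_id v
    simp only [LinearMap.comp_apply, LinearMap.id_apply, LinearEquiv.coe_coe] at hcu
    rw [hrec, map_sum, map_sum] at hcu
    simp only [LinearMap.lTensor_tmul, TensorProduct.rid_tmul] at hcu
    rw [← hcu]
    exact Submodule.sum_mem _ fun i _ => Submodule.smul_mem _ _ (htW i)

/-- Every element of a coalgebra `C` (viewed as a right comodule over itself via `Δ`)
lies in a finite-dimensional subcomodule; consequently every right `C`-comodule is
locally finite-dimensional. -/
theorem locally_finite_dimensional :
    (∀ x : C, ∃ W : Submodule k C,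
        IsSubcomodule (Coalgebra.comul (R := k) (A := C)) W ∧
        FiniteDimensional k W ∧ x ∈ W) ∧
    (∀ (V : Type) (_ : AddCommGroup V) (_ : Module k V)
        (β : V →ₗ[k] V ⊗[k] C), IsComodule β →
      ∀ v : V, ∃ W : Submodule k V,
        IsSubcomodule β W ∧ FiniteDimensional k W ∧ v ∈ W) := by
  have hself : IsComodule (Coalgebra.comul (R := k) (A := C)) := by
    constructor
    · exact Coalgebra.coassoc
    · apply LinearMap.ext
      intro a
      simp
  exact ⟨fun x => aux_key _ hself x,
    fun V _ _ β hβ v => aux_key β hβ v⟩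


end SuperCoalg
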